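/- Let N/k be a finite Galois field extension and E an intermediate field such that Gal(N/k) is the Zappa–Szép product of a subgroup H and Gal(N/E) (i.e., H ∩ Gal(N/E) = {1} and |H|·|Gal(N/E)| = |Gal(N/k)|). Then |H| = [E:k], the compositum E·N^H equals N, and [E·N^H : N^H] = [E:k]. -/

import Mathlib

/-- If `Gal(N/k)` is the Zappa–Szép product of a subgroup `H` and `Gal(N/E)` for
an intermediate field `E` of a finite Galois extension `N/k`, then
`|H| = [E:k]`, the compositum `E·N^H` is all of `N`, and `[E·N^H : N^H] = [E:k]`. -/
theorem zs_product_gives_potentially_galois {k N : Type*} [Field k] [Field N]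
    [Algebra k N] [FiniteDimensional k N] [IsGalois k N]
    (E : IntermediateField k N) (H : Subgroup (N ≃ₐ[k] N))
    (hinf : H ⊓ E.fixingSubgroup = ⊥)
    (hcard : Nat.card H * Nat.card E.fixingSubgroup = Nat.card (N ≃ₐ[k] N)) :
    Nat.card H = Module.finrank k E ∧
    E ⊔ IntermediateField.fixedField H = ⊤ ∧
    Module.finrank (IntermediateField.fixedField H) N = Module.finrank k E := by
  classical
  have hfix : Nat.card E.fixingSubgroup = Module.finrank E N := by
    rw [IsGalois.card_fixingSubgroup_eq_finrank]
  have htot : Nat.card (N ≃ₐ[k] N) = Module.finrank k N := by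
    exact IsGalois.card_aut_eq_finrank k N
  have hmul : Module.finrank k E * Module.finrank E N = Module.finrank k N :=
    Module.finrank_mul_finrank k E N
  have hpos : 0 < Module.finrank E N := Module.finrank_pos
  have h1 : Nat.card H = Module.finrank k E := by
    have : Nat.card H * Module.finrank E N = Module.finrank k E * Module.finrank E N := by
      rw [← hfix, hcard, htot, ← hmul, hfix]
    exact Nat.eq_of_mul_eq_mul_right hpos this
  have hanti : ∀ (A B : IntermediateField k N), A ≤ B → B.fixingSubgroup ≤ A.fixingSubgroup := by
    intro A B hAB g hg
    rw [IntermediateField.mem_fixingSubgroup_iff] at hg ⊢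
    exact fun x hx => hg x (hAB hx)
  have hFH : (IntermediateField.fixedField H).fixingSubgroup = H :=
    IntermediateField.fixingSubgroup_fixedField H
  have hbot : (E ⊔ IntermediateField.fixedField H).fixingSubgroup = ⊥ := by
    rw [← le_bot_iff, ← hinf]
    exact le_inf (le_of_le_of_eq (hanti _ _ le_sup_right) hFH) (hanti _ _ le_sup_left)
  have hfbot : IntermediateField.fixedField (⊥ : Subgroup (N ≃ₐ[k] N)) = ⊤ := by
    rw [eq_top_iff]
    intro x _ g
    have : (g : N ≃ₐ[k] N) = 1 := Subgroup.mem_bot.mp g.2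
    show (g : N ≃ₐ[k] N) x = x
    rw [this]; rfl
  have h2 : E ⊔ IntermediateField.fixedField H = ⊤ := by
    rw [← IsGalois.fixedField_fixingSubgroup (E ⊔ IntermediateField.fixedField H), hbot, hfbot]
  refine ⟨h1, h2, ?_⟩
  rw [IntermediateField.finrank_fixedField_eq_card, h1]
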